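/- In the free monoid on a strictly partially ordered set S modulo commutation of comparable adjacent elements, left cancellation holds: if r·t₂⋯tₙ is equivalent to r·s₂⋯sₙ, then t₂⋯tₙ is equivalent to s₂⋯sₙ. -/

import Mathlib

namespace SPO

variable {S : Type*}

/-- Swap two adjacent comparable letters. -/
def Swap (lt : S → S → Prop) (u v : List S) : Prop :=
  ∃ (x y : List S) (s t : S),
    (lt s t ∨ lt t s) ∧ u = x ++ s :: t :: y ∧ v = x ++ t :: s :: y

/-- Two words are equivalent if related by finitely many swaps of adjacent
comparable letters. -/
def Equiv (lt : S → S → Prop) : List S → List S → Prop :=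
  Relation.ReflTransGen (Swap lt)

/-- A word is in normal form if no adjacent pair satisfies `sᵢ > sᵢ₊₁`. -/
def NormalForm (lt : S → S → Prop) (w : List S) : Prop :=
  List.Chain' (fun a b => ¬ lt b a) w

end SPO

private lemma split4 {S : Type*} (r a b : S) (p q x y : List S)
    (h : p ++ r :: q = x ++ a :: b :: y) :
    (∃ x', x = p ++ r :: x' ∧ q = x' ++ a :: b :: y) ∨
    (p = x ∧ r = a ∧ q = b :: y) ∨
    (p = x ++ [a] ∧ r = b ∧ q = y) ∨
    (∃ p₂, p = x ++ a :: b :: p₂ ∧ y = p₂ ++ r :: q) := by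
  induction x generalizing p with
  | nil =>
    match p with
    | [] => simp_all
    | [c] =>
      simp only [List.cons_append, List.nil_append, List.cons.injEq] at h
      exact Or.inr (Or.inr (Or.inl ⟨by simp [h.1], h.2.1, h.2.2⟩))
    | c :: d :: p₂ =>
      simp only [List.cons_append, List.nil_append, List.cons.injEq] at h
      exact Or.inr (Or.inr (Or.inr ⟨p₂, by simp [h.1, h.2.1], h.2.2.symm⟩))
  | cons c x' ih =>
    match p with
    | [] =>
      simp only [List.nil_append, List.cons_append, List.cons.injEq] at h
      exact Or.inl ⟨x', by simp [h.1], h.2⟩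
    | c' :: p' =>
      simp only [List.cons_append, List.cons.injEq] at h
      obtain ⟨rfl, h2⟩ := h
      rcases ih p' h2 with ⟨x'', h1, h2⟩ | ⟨h1, h2, h3⟩ | ⟨h1, h2, h3⟩ | ⟨p₂, h1, h2⟩
      · exact Or.inl ⟨x'', by simp [h1], h2⟩
      · exact Or.inr (Or.inl ⟨by simp [h1], h2, h3⟩)
      · exact Or.inr (Or.inr (Or.inl ⟨by simp [h1], h2, h3⟩))
      · exact Or.inr (Or.inr (Or.inr ⟨p₂, by simp [h1], h2⟩))

private lemma swap_middle {S : Type*} (lt : S → S → Prop) {a b : S}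
    (hab : lt a b ∨ lt b a) (x y : List S) :
    SPO.Equiv lt (x ++ a :: b :: y) (x ++ b :: a :: y) :=
  Relation.ReflTransGen.single ⟨x, y, a, b, hab, rfl, rfl⟩

/-- Step lemma: track the marked `r` through one swap. -/
private lemma step {S : Type*} (lt : S → S → Prop) (r : S) {p q : List S} {v : List S}
    (hsw : SPO.Swap lt (p ++ r :: q) v)
    (hp : ∀ a ∈ p, lt r a ∨ lt a r) :
    ∃ p' q', v = p' ++ r :: q' ∧ (∀ a ∈ p', lt r a ∨ lt a r) ∧
      SPO.Equiv lt (p ++ q) (p' ++ q') := by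
  obtain ⟨x, y, a, b, hab, hu, hv⟩ := hsw
  rcases split4 r a b p q x y hu with ⟨x', h1, h2⟩ | ⟨h1, h2, h3⟩ | ⟨h1, h2, h3⟩ | ⟨p₂, h1, h2⟩
  · -- swap inside q
    refine ⟨p, x' ++ b :: a :: y, ?_, hp, ?_⟩
    · rw [hv, h1]; simp
    · rw [h2]
      simpa using swap_middle lt hab (p ++ x') y
  · -- r is the left swapped letter
    subst h2
    refine ⟨x ++ [b], y, ?_, ?_, ?_⟩
    · rw [hv]; simp
    · intro c hc
      rcases List.mem_append.1 hc with hc | hc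
      · exact hp c (by rw [h1]; exact hc)
      · simp only [List.mem_singleton] at hc; subst hc; exact hab
    · rw [h1, h3]; simp only [List.append_assoc, List.singleton_append]
      exact Relation.ReflTransGen.refl
  · -- r is the right swapped letter
    subst h2
    refine ⟨x, a :: y, ?_, ?_, ?_⟩
    · rw [hv]
    · intro c hc; exact hp c (by rw [h1]; exact List.mem_append_left _ hc)
    · rw [h1, h3]; simp only [List.append_assoc, List.singleton_append]
      exact Relation.ReflTransGen.refl
  · -- swap inside p
    refine ⟨x ++ b :: a :: p₂, q, ?_, ?_, ?_⟩
    · rw [hv, h2]; simp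
    · intro c hc
      have : c ∈ p := by
        rw [h1]
        simp only [List.mem_append, List.mem_cons] at hc ⊢
        tauto
      exact hp c this
    · rw [h1]
      simpa using swap_middle lt hab x (p₂ ++ q)

open SPO in
/-- Left cancellation modulo commutation of comparable adjacent letters. -/
theorem equiv_left_cancel {S : Type*} (lt : S → S → Prop)
    [IsStrictOrder S lt] (r : S) (t s : List S)
    (h : Equiv lt (r :: t) (r :: s)) :
    Equiv lt t s := by
  have key : ∀ v, Equiv lt (r :: t) v →
      ∃ p q, v = p ++ r :: q ∧ (∀ a ∈ p, lt r a ∨ lt a r) ∧ Equiv lt t (p ++ q) := by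
    intro v hv
    induction hv with
    | refl => exact ⟨[], t, rfl, by simp, Relation.ReflTransGen.refl⟩
    | tail _ hsw ih =>
      obtain ⟨p, q, rfl, hp, heq⟩ := ih
      obtain ⟨p', q', h1, h2, h3⟩ := step lt r hsw hp
      exact ⟨p', q', h1, h2, heq.trans h3⟩
  obtain ⟨p, q, h1, h2, h3⟩ := key _ h
  match p, h1 with
  | [], h1 =>
    simp only [List.nil_append, List.cons.injEq] at h1
    rwa [← h1.2] at h3
  | c :: p', h1 =>
    exfalso
    simp only [List.cons_append, List.cons.injEq] at h1
    have := h2 c (List.mem_cons_self)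
    have hc : c = r := h1.1.symm
    subst hc
    exact (irrefl c : ¬ lt c c) (this.elim id id)
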